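/- Let $(U_t)_{t\in\mathbb{R}}$ be an orthogonal representation of $\mathbb{R}$ on a real Hilbert space $\mathcal{H}$ and $(\beta_t)_{t\in\mathbb{R}}$ a continuous 1-cocycle (i.e., $\beta_{s+t} = \beta_s + U_s \beta_t$) such that $\langle \beta_t, \beta_{-s}\rangle = 0$ for all $s,t > 0$. Then there exists $c \geq 0$ such that $\langle \beta_s, \beta_t\rangle = \frac{c}{2}(|s| + |t| - |s-t|)$ for all $s,t \in \mathbb{R}$. -/

import Mathlib

open scoped RealInnerProductSpace

theorem stmt9 {H : Type*} [NormedAddCommGroup H] [InnerProductSpace ℝ H]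
    (U : ℝ → H →ₗᵢ[ℝ] H) (hU : ∀ s t : ℝ, U (s + t) = (U s).comp (U t))
    (β : ℝ → H) (hβcont : Continuous β)
    (hcoc : ∀ s t : ℝ, β (s + t) = β s + U s (β t))
    (horth : ∀ s t : ℝ, 0 < s → 0 < t → ⟪β t, β (-s)⟫ = 0) :
    ∃ c : ℝ, 0 ≤ c ∧ ∀ s t : ℝ, ⟪β s, β t⟫ = c / 2 * (|s| + |t| - |s - t|) := by
  -- U 0 = id
  have hU0 : ∀ x : H, U 0 x = x := by
    intro x
    have h : U (0 + 0) x = U 0 (U 0 x) := by rw [hU]; rfl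
    rw [zero_add] at h
    exact ((U 0).injective h).symm
  have hβ0 : β 0 = 0 := by
    have h := hcoc 0 0
    rw [zero_add, hU0] at h
    exact left_eq_add.mp h
  have hinv : ∀ s (x : H), U s (U (-s) x) = x := by
    intro s x
    have h : U (s + -s) x = U s (U (-s) x) := by rw [hU]; rfl
    rw [add_neg_cancel, hU0] at h
    exact h.symm
  have hβneg : ∀ t, U (-t) (β t) = -β (-t) := by
    intro t
    have h := hcoc (-t) t
    rw [neg_add_cancel, hβ0] at h
    calc U (-t) (β t) = (β (-t) + U (-t) (β t)) - β (-t) := by abel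
    _ = -β (-t) := by rw [← h]; abel
  have hb : ∀ u, β (-u) = -(U (-u) (β u)) := fun u => by rw [hβneg u, neg_neg]
  have hadj : ∀ s (x y : H), ⟪x, U s y⟫ = ⟪U (-s) x, y⟫ := by
    intro s x y
    conv_lhs => rw [← hinv s x]
    rw [(U s).inner_map_map]
  -- key orthogonality
  have hkey : ∀ s t : ℝ, 0 < s → 0 ≤ t → ⟪β s, U s (β t)⟫ = 0 := by
    intro s t hs ht
    rcases ht.eq_or_lt with h | h
    · rw [← h, hβ0]; simp
    · rw [hadj, hβneg, inner_neg_left, real_inner_comm, horth s t hs h, neg_zero]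
  -- inner product for 0 ≤ s ≤ t
  have hip : ∀ s t : ℝ, 0 ≤ s → s ≤ t → ⟪β s, β t⟫ = ⟪β s, β s⟫ := by
    intro s t hs hst
    rcases hs.eq_or_lt with h | h
    · rw [← h, hβ0]; simp
    · have hbt : β t = β s + U s (β (t - s)) := by
        have h2 := hcoc s (t - s); rwa [show s + (t - s) = t by ring] at h2
      rw [hbt, inner_add_right, hkey s (t - s) h (by linarith), add_zero]
  -- additivity of norms squared
  have hf0 : ∀ s t : ℝ, 0 ≤ s → 0 ≤ t →
      ⟪β (s + t), β (s + t)⟫ = ⟪β s, β s⟫ + ⟪β t, β t⟫ := by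
    intro s t hs ht
    rcases hs.eq_or_lt with h | h
    · rw [← h, zero_add, hβ0]; simp
    rw [hcoc s t, inner_add_left, inner_add_right, inner_add_right,
        (U s).inner_map_map]
    have h6 := hkey s t h ht
    have h7 : ⟪(U s) (β t), β s⟫ = 0 := by rw [real_inner_comm]; exact h6
    rw [h6, h7]; ring
  set c : ℝ := ⟪β 1, β 1⟫ with hc
  have hcnn : 0 ≤ c := real_inner_self_nonneg
  -- glued additive function
  set g : ℝ → ℝ := fun t => if 0 ≤ t then ⟪β t, β t⟫ else -⟪β (-t), β (-t)⟫ with hg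
  have hgadd : ∀ s t : ℝ, g (s + t) = g s + g t := by
    intro s t
    have key : ∀ a b : ℝ, 0 ≤ a → 0 ≤ b →
        ⟪β (a + b), β (a + b)⟫ = ⟪β a, β a⟫ + ⟪β b, β b⟫ := hf0
    rcases le_or_gt 0 s with hs | hs <;> rcases le_or_gt 0 t with ht | ht <;>
      rcases le_or_gt 0 (s + t) with hst | hst <;> simp only [hg]
    · rw [if_pos hs, if_pos ht, if_pos hst]
      exact key s t hs ht
    · exfalso; linarith
    · -- s ≥ 0, t < 0, s + t ≥ 0
      rw [if_pos hs, if_neg (not_le.mpr ht), if_pos hst]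
      have h2 := key (s + t) (-t) hst (by linarith)
      rw [show s + t + -t = s by ring] at h2
      linarith
    · -- s ≥ 0, t < 0, s + t < 0
      rw [if_pos hs, if_neg (not_le.mpr ht), if_neg (not_le.mpr hst)]
      have h2 := key s (-(s + t)) hs (by linarith)
      rw [show s + -(s + t) = -t by ring] at h2
      linarith
    · -- s < 0, t ≥ 0, s + t ≥ 0
      rw [if_neg (not_le.mpr hs), if_pos ht, if_pos hst]
      have h2 := key (s + t) (-s) hst (by linarith)
      rw [show s + t + -s = t by ring] at h2
      linarith
    · -- s < 0, t ≥ 0, s + t < 0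
      rw [if_neg (not_le.mpr hs), if_pos ht, if_neg (not_le.mpr hst)]
      have h2 := key t (-(s + t)) ht (by linarith)
      rw [show t + -(s + t) = -s by ring] at h2
      linarith
    · -- s < 0, t < 0, s + t ≥ 0 impossible
      exfalso; linarith
    · -- s < 0, t < 0
      rw [if_neg (not_le.mpr hs), if_neg (not_le.mpr ht), if_neg (not_le.mpr hst)]
      have h2 := key (-s) (-t) (by linarith) (by linarith)
      rw [show -s + -t = -(s + t) by ring] at h2
      linarith
  have hgcont : Continuous g := by
    have h1 : Continuous fun t : ℝ => ⟪β t, β t⟫ := hβcont.inner hβcont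
    have h2 : Continuous fun t : ℝ => -⟪β (-t), β (-t)⟫ :=
      ((h1.comp continuous_neg).neg)
    have : g = fun t : ℝ => if (0:ℝ) ≤ t then ⟪β t, β t⟫ else -⟪β (-t), β (-t)⟫ := rfl
    rw [this]
    apply Continuous.if_le h1 h2 continuous_const continuous_id
    intro x hx
    have hx' : x = 0 := by simpa using hx.symm
    rw [hx']; simp [hβ0]
  let G : ℝ →+ ℝ := AddMonoidHom.mk' g (fun s t => hgadd s t)
  have hGg : ∀ t, G t = g t := fun t => rfl
  have hlin : ∀ t : ℝ, 0 ≤ t → ⟪β t, β t⟫ = c * t := by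
    intro t ht
    have h1 : G t = t • G 1 := by
      have := map_real_smul G (by exact hgcont) t (1 : ℝ)
      simpa using this
    rw [hGg, hGg] at h1
    have hg1 : g 1 = c := by simp [hg, hc]
    have hgt : g t = ⟪β t, β t⟫ := by simp [hg, ht]
    rw [hgt, hg1] at h1
    rw [h1, smul_eq_mul]; ring
  -- negative-negative case
  have hipneg : ∀ s t : ℝ, 0 < s → s ≤ t → ⟪β (-s), β (-t)⟫ = ⟪β s, β s⟫ := by
    intro s t hs hst
    have h1 : ⟪β (-s), β (-t)⟫ = ⟪U (-s) (β s), U (-t) (β t)⟫ := by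
      rw [hb s, hb t, inner_neg_neg]
    have h2 : U (-t) (U (t - s) (β s)) = U (-s) (β s) := by
      have h3 : U (-t + (t - s)) (β s) = U (-t) (U (t - s) (β s)) := by rw [hU]; rfl
      rw [show -t + (t - s) = -s by ring] at h3
      exact h3.symm
    rw [h1, ← h2, (U (-t)).inner_map_map]
    have hbt : β t = β (t - s) + U (t - s) (β s) := by
      have h4 := hcoc (t - s) s; rwa [show t - s + s = t by ring] at h4
    rw [hbt, inner_add_right, (U (t - s)).inner_map_map]
    have h5 : ⟪U (t - s) (β s), β (t - s)⟫ = 0 := by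
      rcases hst.eq_or_lt with h | h
      · rw [← h]; simp [hβ0]
      · rw [real_inner_comm]; exact hkey (t - s) s (by linarith) hs.le
    rw [h5, zero_add]
  refine ⟨c, hcnn, ?_⟩
  have main : ∀ s t : ℝ, 0 ≤ s → s ≤ t → ⟪β s, β t⟫ = c * s := by
    intro s t hs hst; rw [hip s t hs hst, hlin s hs]
  have mainneg : ∀ s t : ℝ, 0 ≤ s → s ≤ t → ⟪β (-s), β (-t)⟫ = c * s := by
    intro s t hs hst
    rcases hs.eq_or_lt with h | h
    · rw [← h]; simp [hβ0]
    · rw [hipneg s t h hst, hlin s hs]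
  have mixed : ∀ s t : ℝ, 0 ≤ s → 0 ≤ t → ⟪β t, β (-s)⟫ = 0 := by
    intro s t hs ht
    rcases hs.eq_or_lt with h | h
    · rw [← h]; simp [hβ0]
    rcases ht.eq_or_lt with h2 | h2
    · rw [← h2]; simp [hβ0]
    exact horth s t h h2
  intro s t
  rcases le_total 0 s with hs | hs <;> rcases le_total 0 t with ht | ht
  · rcases le_total s t with h | h
    · rw [main s t hs h, abs_of_nonneg hs, abs_of_nonneg ht,
        abs_of_nonpos (by linarith : s - t ≤ 0)]; ring
    · rw [real_inner_comm, main t s ht h, abs_of_nonneg hs, abs_of_nonneg ht,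
        abs_of_nonneg (by linarith : (0:ℝ) ≤ s - t)]; ring
  · -- s ≥ 0, t ≤ 0
    have h0 : ⟪β s, β t⟫ = 0 := by
      have := mixed (-t) s (by linarith) hs
      rwa [neg_neg] at this
    rw [h0, abs_of_nonneg hs, abs_of_nonpos ht,
      abs_of_nonneg (by linarith : (0:ℝ) ≤ s - t)]; ring
  · -- s ≤ 0, t ≥ 0
    have h0 : ⟪β s, β t⟫ = 0 := by
      have := mixed (-s) t (by linarith) ht
      rw [neg_neg] at this
      rw [real_inner_comm]; exact this
    rw [h0, abs_of_nonpos hs, abs_of_nonneg ht,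
      abs_of_nonpos (by linarith : s - t ≤ 0)]; ring
  · -- s ≤ 0, t ≤ 0
    rcases le_total s t with h | h
    · have h0 := mainneg (-t) (-s) (by linarith) (by linarith)
      rw [neg_neg, neg_neg] at h0
      rw [real_inner_comm, h0, abs_of_nonpos hs, abs_of_nonpos ht,
        abs_of_nonpos (by linarith : s - t ≤ 0)]; ring
    · have h0 := mainneg (-s) (-t) (by linarith) (by linarith)
      rw [neg_neg, neg_neg] at h0
      rw [h0, abs_of_nonpos hs, abs_of_nonpos ht,
        abs_of_nonneg (by linarith : (0:ℝ) ≤ s - t)]; ring
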